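/- Let P be a training set in EuclideanSpace ℝ (Fin d) and let p ∈ P. Then there exists a point p* ∈ P with l(p*) = l(p) and ‖p − p*‖ < d_ne(p) such that p* is a border point of P. (That is, the open nearest-enemy ball of every point of P contains a border point of the same class as p; one such p* lies, together with a nearest enemy of p, on the boundary of a ball whose interior contains no point of P.) -/
import Mathlib


/-- The nearest-enemy distance of `p`: the minimum of `‖p - q‖` over enemies `q` of `p`. -/
noncomputable def dne {d : ℕ} {Λ : Type*} (P : Finset (EuclideanSpace ℝ (Fin d)))
    (l : EuclideanSpace ℝ (Fin d) → Λ) (p : EuclideanSpace ℝ (Fin d)) : ℝ :=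
  sInf {r : ℝ | ∃ q ∈ P, l q ≠ l p ∧ r = ‖p - q‖}

/-- `q` is a nearest enemy of `p` in `P`: an enemy of `p` at minimum distance. -/
def IsNearestEnemy {d : ℕ} {Λ : Type*} (P : Finset (EuclideanSpace ℝ (Fin d)))
    (l : EuclideanSpace ℝ (Fin d) → Λ) (p q : EuclideanSpace ℝ (Fin d)) : Prop :=
  q ∈ P ∧ l q ≠ l p ∧ ∀ q' ∈ P, l q' ≠ l p → ‖p - q‖ ≤ ‖p - q'‖

/-- `p` is a border point of `P`: it lies, together with some enemy `q`, on the boundary of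
a ball containing no point of `P` in its interior. -/
def IsBorder {d : ℕ} {Λ : Type*} (P : Finset (EuclideanSpace ℝ (Fin d)))
    (l : EuclideanSpace ℝ (Fin d) → Λ) (p : EuclideanSpace ℝ (Fin d)) : Prop :=
  ∃ q ∈ P, l q ≠ l p ∧ ∃ (z : EuclideanSpace ℝ (Fin d)) (ρ : ℝ), 0 < ρ ∧
    ‖z - p‖ = ρ ∧ ‖z - q‖ = ρ ∧ ∀ x ∈ P, ρ ≤ ‖z - x‖

/-- The open nearest-enemy ball of every `p ∈ P` contains a border point of `P`
of the same class as `p`. -/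
theorem border_point_in_ne_ball {d : ℕ} {Λ : Type*}
    (P : Finset (EuclideanSpace ℝ (Fin d))) (l : EuclideanSpace ℝ (Fin d) → Λ)
    (hP : ∀ p ∈ P, ∃ q ∈ P, l q ≠ l p)
    (p : EuclideanSpace ℝ (Fin d)) (hp : p ∈ P) :
    ∃ pstar ∈ P, l pstar = l p ∧ ‖p - pstar‖ < dne P l p ∧ IsBorder P l pstar := by
  classical
  obtain ⟨q1, hq1P, hq1l⟩ := hP p hp
  set S : Set ℝ := {r : ℝ | ∃ q ∈ P, l q ≠ l p ∧ r = ‖p - q‖} with hS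
  have hSfin : S.Finite := by
    apply (P.finite_toSet.image (fun x => ‖p - x‖)).subset
    rintro r ⟨q, hq, hql, rfl⟩
    exact ⟨q, hq, rfl⟩
  have hSne : S.Nonempty := ⟨‖p - q1‖, q1, hq1P, hq1l, rfl⟩
  have hmem : dne P l p ∈ S := hSne.csInf_mem hSfin
  set D := dne P l p with hDdef
  obtain ⟨q, hqP, hql, hqD⟩ := hmem
  have hqpD : ‖q - p‖ = D := by rw [norm_sub_rev]; exact hqD.symm
  have hD0 : 0 < D := by
    rw [hqD, norm_pos_iff]
    exact sub_ne_zero.mpr fun h => hql (by rw [h])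
  -- same-class and enemy sets
  set A : Set (EuclideanSpace ℝ (Fin d)) := {x | x ∈ P ∧ l x = l p} with hA
  set B : Set (EuclideanSpace ℝ (Fin d)) := {x | x ∈ P ∧ l x ≠ l p} with hB
  have hAfin : A.Finite := P.finite_toSet.subset fun x hx => Finset.mem_coe.mpr hx.1
  have hBfin : B.Finite := P.finite_toSet.subset fun x hx => Finset.mem_coe.mpr hx.1
  have hAne : A.Nonempty := ⟨p, hp, rfl⟩
  have hBne : B.Nonempty := ⟨q, hqP, hql⟩
  have hAcl : IsClosed A := hAfin.isClosed
  have hBcl : IsClosed B := hBfin.isClosed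
  set w : ℝ → EuclideanSpace ℝ (Fin d) := fun t => p + t • (q - p) with hw
  have hwcont : Continuous w := continuous_const.add (continuous_id.smul continuous_const)
  set φ : ℝ → ℝ := fun t => Metric.infDist (w t) A - Metric.infDist (w t) B with hφ
  have hφcont : Continuous φ :=
    ((Metric.continuous_infDist_pt A).comp hwcont).sub
      ((Metric.continuous_infDist_pt B).comp hwcont)
  have hw0 : w 0 = p := by simp [hw]
  have hw1 : w 1 = q := by
    show p + (1 : ℝ) • (q - p) = q
    rw [one_smul]; abel
  have hφ0 : φ 0 ≤ 0 := by
    have h1 : Metric.infDist (w 0) A = 0 := by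
      rw [hw0]; exact Metric.infDist_zero_of_mem ⟨hp, rfl⟩
    have h2 : (0:ℝ) ≤ Metric.infDist (w 0) B := Metric.infDist_nonneg
    simp only [hφ]; linarith
  have hφ1 : 0 ≤ φ 1 := by
    have h1 : Metric.infDist (w 1) B = 0 := by
      rw [hw1]; exact Metric.infDist_zero_of_mem ⟨hqP, hql⟩
    have h2 : (0:ℝ) ≤ Metric.infDist (w 1) A := Metric.infDist_nonneg
    simp only [hφ]; linarith
  obtain ⟨t, ht01, htz⟩ : ∃ t ∈ Set.Icc (0:ℝ) 1, φ t = 0 :=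
    intermediate_value_Icc (by norm_num) hφcont.continuousOn ⟨hφ0, hφ1⟩
  set z := w t with hz
  set ρ := Metric.infDist z A with hρ
  have hρB : Metric.infDist z B = ρ := by
    have := htz
    simp only [hφ] at this
    linarith
  have hρnn : (0:ℝ) ≤ ρ := Metric.infDist_nonneg
  have hρ0 : 0 < ρ := by
    rcases hρnn.lt_or_eq with h | h
    · exact h
    · exfalso
      have hzA : z ∈ A := (hAcl.mem_iff_infDist_zero hAne).2 h.symm
      have hzB : z ∈ B := (hBcl.mem_iff_infDist_zero hBne).2 (by rw [hρB, ← h])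
      exact hzB.2 hzA.2
  obtain ⟨a, haA, haD⟩ := hAcl.exists_infDist_eq_dist hAne z
  obtain ⟨b, hbB, hbD⟩ := hBcl.exists_infDist_eq_dist hBne z
  have hza : ‖z - a‖ = ρ := by rw [← dist_eq_norm]; exact haD.symm
  have hzb : ‖z - b‖ = ρ := by rw [← dist_eq_norm, ← hbD, hρB]
  have hpz_eq : p - z = (-t) • (q - p) := by
    simp only [hz, hw]
    rw [neg_smul]; abel
  have hzp : ‖z - p‖ = t * D := by
    rw [norm_sub_rev, hpz_eq, norm_smul, Real.norm_eq_abs, abs_neg,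
      abs_of_nonneg ht01.1, hqpD]
  have hzq : ‖z - q‖ = (1 - t) * D := by
    have e : z - q = (t - 1) • (q - p) := by
      simp only [hz, hw, sub_smul, one_smul]; abel
    rw [e, norm_smul, Real.norm_eq_abs, abs_of_nonpos (by linarith [ht01.2]), hqpD]
    ring
  have hρ_le_zp : ρ ≤ t * D := by
    rw [← hzp, ← dist_eq_norm]
    exact Metric.infDist_le_dist_of_mem ⟨hp, rfl⟩
  have hρ_le_zq : ρ ≤ (1 - t) * D := by
    rw [← hzq, ← dist_eq_norm, ← hρB]
    exact Metric.infDist_le_dist_of_mem ⟨hqP, hql⟩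
  have hpa_split : p - a = (p - z) + (z - a) := by abel
  have hpa_le : ‖p - a‖ ≤ D := by
    calc ‖p - a‖ = ‖(p - z) + (z - a)‖ := by rw [← hpa_split]
      _ ≤ ‖p - z‖ + ‖z - a‖ := norm_add_le _ _
      _ = t * D + ρ := by rw [norm_sub_rev, hzp, hza]
      _ ≤ D := by linarith
  have hpa_lt : ‖p - a‖ < D := by
    rcases hpa_le.lt_or_eq with h | h
    · exact h
    exfalso
    have hpzn : ‖p - z‖ = t * D := by rw [norm_sub_rev, hzp]
    have hsum : ‖(p - z) + (z - a)‖ = ‖p - z‖ + ‖z - a‖ := by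
      have h1 : ‖(p - z) + (z - a)‖ = D := by rw [← hpa_split, h]
      have h2 : ‖p - z‖ + ‖z - a‖ ≤ D := by rw [hpzn, hza]; linarith
      have h3 : ‖(p - z) + (z - a)‖ ≤ ‖p - z‖ + ‖z - a‖ := norm_add_le _ _
      linarith
    have ht0 : 0 < t := by nlinarith
    have hpz0 : p - z ≠ 0 := by
      rw [← norm_pos_iff] at *
      rw [hpzn]; positivity
    have hza0 : z - a ≠ 0 := by rw [← norm_pos_iff, hza]; exact hρ0
    have hsr : SameRay ℝ (p - z) (z - a) := sameRay_iff_norm_add.mpr hsum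
    obtain ⟨r₁, r₂, hr₁, hr₂, hr⟩ := hsr.exists_pos hpz0 hza0
    set c := r₁ / r₂ with hc
    have hc0 : 0 < c := div_pos hr₁ hr₂
    have hza_eq : z - a = c • (p - z) := by
      have := congrArg (fun v => r₂⁻¹ • v) hr
      simp only [smul_smul] at this
      rw [inv_mul_cancel₀ hr₂.ne', one_smul] at this
      rw [← this, hc, div_eq_mul_inv, mul_comm]
    have hza_eq2 : z - a = (c * (-t)) • (q - p) := by
      rw [hza_eq, hpz_eq, smul_smul]
    have hctD : c * t * D = ρ := by
      have := congrArg norm hza_eq2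
      rw [hza, norm_smul, Real.norm_eq_abs, hqpD, mul_neg, abs_neg,
        abs_of_nonneg (by positivity)] at this
      linarith
    have hρ_eq : ρ = (1 - t) * D := by
      have : D ≤ t * D + ρ := by
        rw [← hpzn, ← hza, ← hsum, ← hpa_split, h]
      linarith
    have hct : c * (-t) = t - 1 := by
      have : c * t = 1 - t := by
        have := hctD
        rw [hρ_eq] at this
        exact mul_right_cancel₀ hD0.ne' this
      linarith
    have haq : a = q := by
      rw [hct] at hza_eq2
      have : a = z - (t - 1) • (q - p) := by rw [← hza_eq2]; abel
      rw [this]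
      simp only [hz, hw, sub_smul, one_smul]
      abel
    rw [haq] at haA
    exact hql haA.2
  refine ⟨a, haA.1, haA.2, hpa_lt, ?_⟩
  refine ⟨b, hbB.1, by rw [haA.2]; exact hbB.2, z, ρ, hρ0, hza, hzb, ?_⟩
  intro x hx
  rw [← dist_eq_norm]
  by_cases hxl : l x = l p
  · exact Metric.infDist_le_dist_of_mem (⟨hx, hxl⟩ : x ∈ A)
  · rw [← hρB]
    exact Metric.infDist_le_dist_of_mem (⟨hx, hxl⟩ : x ∈ B)
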